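/- Suppose V : ℝ≥0 → ℝ is differentiable with V̇(t) ≤ 0 for all t, and ψ(‖x_{ij}(t)‖) ≤ V(t) for each edge (i,j), where ψ is strictly increasing on [0, r]. If V(0) < ψ(r) and ‖x_{ij}(0)‖ ≤ r, and t ↦ ‖x_{ij}(t)‖ is continuous, then ‖x_{ij}(t)‖ < r for all t ≥ 0. -/

import Mathlib

/-- Connectivity preservation: if a differentiable `V` is nonincreasing
(`V̇ ≤ 0` on `t ≥ 0`), dominates each link potential `ψ(d(t)) ≤ V(t)` for a
continuous nonnegative distance `d`, `ψ` is strictly increasing on `[0, r]`,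
`V(0) < ψ(r)` and `d(0) ≤ r`, then `d(t) < r` for all `t ≥ 0`. -/
theorem connectivity_preserved_of_lyapunov
    (ψ : ℝ → ℝ) (V d : ℝ → ℝ) (r : ℝ) (hr : 0 < r)
    (hψmono : StrictMonoOn ψ (Set.Icc 0 r))
    (hVdiff : Differentiable ℝ V)
    (hVdec : ∀ t ≥ (0 : ℝ), deriv V t ≤ 0)
    (hd_cont : Continuous d)
    (hd_nonneg : ∀ t ≥ (0 : ℝ), 0 ≤ d t)
    (hdom : ∀ t ≥ (0 : ℝ), ψ (d t) ≤ V t)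
    (hV0 : V 0 < ψ r)
    (hd0 : d 0 ≤ r) :
    ∀ t ≥ (0 : ℝ), d t < r := by
  have hVanti : AntitoneOn V (Set.Ici (0 : ℝ)) := by
    apply antitoneOn_of_deriv_nonpos (convex_Ici 0) hVdiff.continuous.continuousOn
    · intro x hx
      exact (hVdiff x).differentiableWithinAt
    · intro x hx
      exact hVdec x (le_of_lt (by simpa using hx))
  intro t ht
  by_contra h
  push_neg at h
  -- there is s ∈ [0, t] with d s = r
  have : r ∈ d '' Set.Icc 0 t := by
    apply intermediate_value_Icc ht hd_cont.continuousOn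
    exact ⟨hd0, h⟩
  obtain ⟨s, hs, hds⟩ := this
  have hs0 : (0:ℝ) ≤ s := hs.1
  have h1 : ψ r ≤ V s := by rw [← hds]; exact hdom s hs0
  have h2 : V s ≤ V 0 := hVanti (Set.mem_Ici.mpr (le_refl (0:ℝ))) (Set.mem_Ici.mpr hs0) hs0
  linarith
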